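/- Let q be a primitive m-th root of unity in K and λ₁, λ₂ ∈ K nonzero. Then the quotient Q_{1,m} = M(λ)/M_{1,m} of the Verma module is a simple right Mat₂(q)-module of K-dimension m². -/

import Mathlib

noncomputable section

open FreeAlgebra MulOpposite

/-- The relations of the Dipper–Donkin quantized matrix algebra of rank 2:
`Z12·Z11 = Z11·Z12`, `Z21·Z11 = q·Z11·Z21`, `Z22·Z21 = Z21·Z22`, `Z22·Z12 = q·Z12·Z22`,
`Z21·Z12 = q·Z12·Z21`, `Z22·Z11 = Z11·Z22 + (q−1)·Z12·Z21`, where the generators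
`Z11, Z12, Z21, Z22` are the images of `0, 1, 2, 3 : Fin 4`. -/
inductive DDrel {K : Type*} [Field K] (q : K) :
    FreeAlgebra K (Fin 4) → FreeAlgebra K (Fin 4) → Prop
  | r1 : DDrel q (ι K (1 : Fin 4) * ι K (0 : Fin 4)) (ι K (0 : Fin 4) * ι K (1 : Fin 4))
  | r2 : DDrel q (ι K (2 : Fin 4) * ι K (0 : Fin 4)) (q • (ι K (0 : Fin 4) * ι K (2 : Fin 4)))
  | r3 : DDrel q (ι K (3 : Fin 4) * ι K (2 : Fin 4)) (ι K (2 : Fin 4) * ι K (3 : Fin 4))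
  | r4 : DDrel q (ι K (3 : Fin 4) * ι K (1 : Fin 4)) (q • (ι K (1 : Fin 4) * ι K (3 : Fin 4)))
  | r5 : DDrel q (ι K (2 : Fin 4) * ι K (1 : Fin 4)) (q • (ι K (1 : Fin 4) * ι K (2 : Fin 4)))
  | r6 : DDrel q (ι K (3 : Fin 4) * ι K (0 : Fin 4))
      (ι K (0 : Fin 4) * ι K (3 : Fin 4) + (q - 1) • (ι K (1 : Fin 4) * ι K (2 : Fin 4)))

/-- The Dipper–Donkin quantized matrix algebra `Mat₂(q)`: the quotient of the free
`K`-algebra on four generators by the two-sided ideal generated by the relations above. -/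
abbrev DDMat2 {K : Type*} [Field K] (q : K) := RingQuot (DDrel q)

variable {K : Type*} [Field K]

/-- The generator `Z11` of `Mat₂(q)`. -/
def Z11 (q : K) : DDMat2 q := RingQuot.mkAlgHom K (DDrel q) (ι K (0 : Fin 4))
/-- The generator `Z12` of `Mat₂(q)`. -/
def Z12 (q : K) : DDMat2 q := RingQuot.mkAlgHom K (DDrel q) (ι K (1 : Fin 4))
/-- The generator `Z21` of `Mat₂(q)`. -/
def Z21 (q : K) : DDMat2 q := RingQuot.mkAlgHom K (DDrel q) (ι K (2 : Fin 4))
/-- The generator `Z22` of `Mat₂(q)`. -/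
def Z22 (q : K) : DDMat2 q := RingQuot.mkAlgHom K (DDrel q) (ι K (3 : Fin 4))

/-- The underlying space of the Verma module `M(λ)`: the `K`-vector space with basis
`f(a,b)`, `a : Fin m`, `b : ℕ`, realized as finitely supported functions. -/
abbrev VermaSpace (K : Type*) [Field K] (m : ℕ) := ((Fin m × ℕ) →₀ K)

variable (q la lb : K) (m : ℕ) [NeZero m]

/-- The action of `Z11` on the Verma module `M(λ)`:
`f(a,b)·Z11 = 0` if `b = 0` and `λ₁·q^a·(q^b − 1)·f(a+1,b−1)` if `b ≥ 1`, where `f(m,c)`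
is interpreted as `λ₂·f(0,c)` (addition in `Fin m` is cyclic). -/
noncomputable def VF11 : VermaSpace K m →ₗ[K] VermaSpace K m :=
  Finsupp.linearCombination K fun p : Fin m × ℕ =>
    if p.2 = 0 then 0 else
      ((if (p.1 : ℕ) = m - 1 then lb else 1) * la * q ^ (p.1 : ℕ) * (q ^ p.2 - 1)) •
        Finsupp.single (p.1 + 1, p.2 - 1) (1 : K)

/-- The action of `Z12` on the Verma module: `f(a,b)·Z12 = q^{a+b}·λ₁·f(a,b)`. -/
noncomputable def VF12 : VermaSpace K m →ₗ[K] VermaSpace K m :=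
  Finsupp.linearCombination K fun p : Fin m × ℕ =>
    (q ^ ((p.1 : ℕ) + p.2) * la) • Finsupp.single p (1 : K)

/-- The action of `Z21` on the Verma module:
`f(a,b)·Z21 = f(a+1,b)` if `a ≤ m−2` and `λ₂·f(0,b)` if `a = m−1`. -/
noncomputable def VF21 : VermaSpace K m →ₗ[K] VermaSpace K m :=
  Finsupp.linearCombination K fun p : Fin m × ℕ =>
    (if (p.1 : ℕ) = m - 1 then lb else 1) • Finsupp.single (p.1 + 1, p.2) (1 : K)

/-- The action of `Z22` on the Verma module: `f(a,b)·Z22 = f(a,b+1)`. -/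
noncomputable def VF22 : VermaSpace K m →ₗ[K] VermaSpace K m :=
  Finsupp.linearCombination K fun p : Fin m × ℕ =>
    Finsupp.single (p.1, p.2 + 1) (1 : K)

/-- The subspace `M_{p,m}` of the Verma module, spanned by the basis vectors `f(a,b)`
with `b ≥ p·m`. -/
def Mpm (p : ℕ) : Submodule K (VermaSpace K m) :=
  Submodule.span K
    {v : VermaSpace K m | ∃ (a : Fin m) (b : ℕ), p * m ≤ b ∧ v = Finsupp.single (a, b) (1 : K)}

set_option linter.unusedSectionVars false

open Fin.NatCast

lemma Mpm_eq_supported :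
    Mpm (K := K) m 1 = Finsupp.supported K K {p : Fin m × ℕ | m ≤ p.2} := by
  rw [Finsupp.supported_eq_span_single, Mpm]
  congr 1
  ext v
  constructor
  · rintro ⟨a, b, hb, rfl⟩
    exact ⟨(a, b), by simpa using hb, rfl⟩
  · rintro ⟨⟨a, b⟩, hb, rfl⟩
    exact ⟨a, b, by simpa using hb, rfl⟩

lemma single_not_mem_Mpm (a : Fin m) (b : ℕ) (hb : b < m) :
    Finsupp.single (a, b) (1 : K) ∉ Mpm (K := K) m 1 := by
  rw [Mpm_eq_supported]
  intro h
  have := (Finsupp.mem_supported' K _).1 h (a, b) (by simpa [Set.mem_setOf_eq] using Nat.not_le.2 hb)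
  simp [Finsupp.single_eq_same] at this

lemma isCompl_supported :
    IsCompl (Finsupp.supported K K {p : Fin m × ℕ | m ≤ p.2})
      (Finsupp.supported K K {p : Fin m × ℕ | p.2 < m}) := by
  constructor
  · exact Finsupp.disjoint_supported_supported
      (Set.disjoint_left.2 fun p hp hp' => absurd hp' (Nat.not_lt.2 hp))
  · rw [codisjoint_iff, ← Finsupp.supported_union]
    have : ({p : Fin m × ℕ | m ≤ p.2} ∪ {p : Fin m × ℕ | p.2 < m}) = Set.univ := by
      ext p; simp [le_or_gt]
    rw [this, Finsupp.supported_univ]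

lemma finrank_quot : Module.finrank K (VermaSpace K m ⧸ Mpm (K := K) m 1) = m ^ 2 := by
  rw [Mpm_eq_supported]
  have e1 := Submodule.quotientEquivOfIsCompl _ _ (isCompl_supported (K := K) m)
  have e2 := Finsupp.supportedEquivFinsupp (M := K) (R := K) {p : Fin m × ℕ | p.2 < m}
  have e : {p : Fin m × ℕ | p.2 < m} ≃ (Fin m × Fin m) :=
    { toFun := fun x => (x.1.1, ⟨x.1.2, x.2⟩)
      invFun := fun y => ⟨(y.1, y.2), y.2.isLt⟩
      left_inv := fun x => rfl
      right_inv := fun y => rfl }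
  have e3 := Finsupp.domLCongr (M := K) (R := K) e
  rw [e1.finrank_eq, e2.finrank_eq, e3.finrank_eq, Module.finrank_finsupp_self]
  simp [sq]

lemma natCast_m_ne_zero (hq1 : q ^ m = 1) (hq2 : ∀ k : ℕ, 1 ≤ k → k < m → q ^ k ≠ 1) :
    (m : K) ≠ 0 := by
  have hprim : IsPrimitiveRoot q m := by
    constructor
    · exact hq1
    · intro l hl
      rcases Nat.eq_zero_or_pos (l % m) with h | h
      · exact Nat.dvd_of_mod_eq_zero h
      · exfalso
        have hml : q ^ (l % m) = 1 := by
          conv_rhs => rw [← hl]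
          conv_rhs => rw [← Nat.div_add_mod l m]
          rw [pow_add, pow_mul, hq1, one_pow, one_mul]
        exact hq2 _ h (Nat.mod_lt _ (NeZero.pos m)) hml
  exact hprim.neZero'.out

lemma VF12_single (p : Fin m × ℕ) (k : K) :
    VF12 q la m (Finsupp.single p k) = (q ^ ((p.1 : ℕ) + p.2) * la) • Finsupp.single p k := by
  rw [VF12, Finsupp.linearCombination_single, smul_comm]
  congr 1
  rw [Finsupp.smul_single, smul_eq_mul, mul_one]

lemma VF12_pow_single (j : ℕ) (p : Fin m × ℕ) (k : K) :
    ((VF12 q la m) ^ j) (Finsupp.single p k)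
      = ((q ^ ((p.1 : ℕ) + p.2) * la) ^ j) • Finsupp.single p k := by
  induction j with
  | zero => simp
  | succ n ih =>
      rw [pow_succ, Module.End.mul_apply, VF12_single, map_smul, ih, smul_smul, ← pow_succ']

lemma q_ne_zero (hq1 : q ^ m = 1) : q ≠ 0 := by
  intro h
  rw [h, zero_pow (NeZero.ne m)] at hq1
  exact zero_ne_one hq1

lemma q_pow_mod (hq1 : q ^ m = 1) (n : ℕ) : q ^ n = q ^ (n % m) := by
  conv_lhs => rw [← Nat.div_add_mod n m, pow_add, pow_mul, hq1, one_pow, one_mul]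

lemma q_pow_inj (hq1 : q ^ m = 1) (hq2 : ∀ k : ℕ, 1 ≤ k → k < m → q ^ k ≠ 1)
    {i j : ℕ} (hi : i < m) (hj : j < m) (h : q ^ i = q ^ j) : i = j := by
  rcases le_total i j with hij | hij
  · by_contra hne
    have h1 : q ^ i * q ^ (j - i) = q ^ i * 1 := by
      rw [← pow_add, Nat.add_sub_cancel' hij, h, mul_one]
    have h2 : q ^ (j - i) = 1 := mul_left_cancel₀ (pow_ne_zero _ (q_ne_zero q m hq1)) h1
    exact hq2 (j - i) (Nat.one_le_iff_ne_zero.2 (fun h0 => hne (Nat.le_antisymm hij (Nat.sub_eq_zero_iff_le.1 h0))))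
      (lt_of_le_of_lt (Nat.sub_le _ _) hj) h2
  · by_contra hne
    have h1 : q ^ j * q ^ (i - j) = q ^ j * 1 := by
      rw [← pow_add, Nat.add_sub_cancel' hij, ← h, mul_one]
    have h2 : q ^ (i - j) = 1 := mul_left_cancel₀ (pow_ne_zero _ (q_ne_zero q m hq1)) h1
    exact hq2 (i - j) (Nat.one_le_iff_ne_zero.2 (fun h0 => hne (Nat.le_antisymm (Nat.sub_eq_zero_iff_le.1 h0) hij)))
      (lt_of_le_of_lt (Nat.sub_le _ _) hi) h2

lemma L_eq_filter (hq1 : q ^ m = 1) (hq2 : ∀ k : ℕ, 1 ≤ k → k < m → q ^ k ≠ 1)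
    (hla : la ≠ 0) (c : ℕ) (hc : c < m) (w : VermaSpace K m) :
    ((m : K)⁻¹ • ∑ j ∈ Finset.range m, ((q ^ c * la)⁻¹) ^ j • (VF12 q la m) ^ j) w
      = w.filter (fun p : Fin m × ℕ => ((p.1 : ℕ) + p.2) % m = c) := by
  induction w using Finsupp.induction_linear with
  | zero => simp [Finsupp.filter_zero]
  | add u v hu hv => rw [map_add, hu, hv, Finsupp.filter_add]
  | single p k =>
    have hq0 : q ≠ 0 := q_ne_zero q m hq1
    have hbase : (q ^ c * la) ≠ 0 := mul_ne_zero (pow_ne_zero _ hq0) hla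
    set t : K := (q ^ c * la)⁻¹ * (q ^ ((p.1 : ℕ) + p.2) * la) with ht
    have key : ((m : K)⁻¹ • ∑ j ∈ Finset.range m, ((q ^ c * la)⁻¹) ^ j • (VF12 q la m) ^ j)
        (Finsupp.single p k)
        = ((m : K)⁻¹ * ∑ j ∈ Finset.range m, t ^ j) • Finsupp.single p k := by
      rw [LinearMap.smul_apply, LinearMap.sum_apply]
      have hterm : ∀ j ∈ Finset.range m,
          (((q ^ c * la)⁻¹) ^ j • (VF12 q la m) ^ j) (Finsupp.single p k)
            = t ^ j • Finsupp.single p k := fun j _ => by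
        rw [LinearMap.smul_apply, VF12_pow_single, smul_smul]
        rw [ht]
        ring
      rw [Finset.sum_congr rfl hterm, ← Finset.sum_smul, smul_smul]
    rw [key]
    by_cases hp : ((p.1 : ℕ) + p.2) % m = c
    · have hqq : q ^ ((p.1 : ℕ) + p.2) = q ^ c := by
        rw [q_pow_mod q m hq1, hp]
      have ht1 : t = 1 := by
        rw [ht, hqq, inv_mul_cancel₀ hbase]
      rw [ht1, Finsupp.filter_single_of_pos (p := fun x : Fin m × ℕ => ((x.1 : ℕ) + x.2) % m = c) hp]
      simp [natCast_m_ne_zero q m hq1 hq2]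
    · have ht1 : t ≠ 1 := by
        intro h
        apply hp
        rw [ht, inv_mul_eq_one₀ hbase] at h
        have hqq := mul_right_cancel₀ hla h
        exact (q_pow_inj q m hq1 hq2 (Nat.mod_lt _ (NeZero.pos m)) hc
          (by rw [← q_pow_mod q m hq1, ← hqq]))
      have h1 : (q ^ ((p.1 : ℕ) + p.2)) ^ m = 1 := by
        rw [← pow_mul, mul_comm, pow_mul, hq1, one_pow]
      have h2 : (q ^ c) ^ m = 1 := by
        rw [← pow_mul, mul_comm, pow_mul, hq1, one_pow]
      have htm : t ^ m = 1 := by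
        rw [ht, mul_pow, inv_pow, mul_pow, mul_pow, h1, h2, one_mul]
        exact inv_mul_cancel₀ (pow_ne_zero _ hla)
      rw [geom_sum_eq ht1, htm, sub_self, zero_div, mul_zero, zero_smul,
        Finsupp.filter_single_of_neg (p := fun x : Fin m × ℕ => ((x.1 : ℕ) + x.2) % m = c) hp]

lemma filter_mem (hq1 : q ^ m = 1) (hq2 : ∀ k : ℕ, 1 ≤ k → k < m → q ^ k ≠ 1)
    (hla : la ≠ 0) (W : Submodule K (VermaSpace K m))
    (hW12 : ∀ v ∈ W, VF12 q la m v ∈ W) (w : VermaSpace K m) (hw : w ∈ W) (c : ℕ) (hc : c < m) :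
    w.filter (fun p : Fin m × ℕ => ((p.1 : ℕ) + p.2) % m = c) ∈ W := by
  rw [← L_eq_filter q la m hq1 hq2 hla c hc w]
  have hiter : ∀ j : ℕ, ((VF12 q la m) ^ j) w ∈ W := by
    intro j
    induction j with
    | zero => simpa using hw
    | succ n ih =>
        rw [pow_succ', Module.End.mul_apply]
        exact hW12 _ ih
  rw [LinearMap.smul_apply, LinearMap.sum_apply]
  refine Submodule.smul_mem _ _ (Submodule.sum_mem _ fun j _ => ?_)
  rw [LinearMap.smul_apply]
  exact Submodule.smul_mem _ _ (hiter j)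

lemma VF11_single (p : Fin m × ℕ) :
    VF11 q la lb m (Finsupp.single p 1) =
      if p.2 = 0 then 0 else
        ((if (p.1 : ℕ) = m - 1 then lb else 1) * la * q ^ (p.1 : ℕ) * (q ^ p.2 - 1)) •
          Finsupp.single (p.1 + 1, p.2 - 1) (1 : K) := by
  rw [VF11, Finsupp.linearCombination_single, one_smul]

lemma VF11_pow_single (hq1 : q ^ m = 1) (hq2 : ∀ k : ℕ, 1 ≤ k → k < m → q ^ k ≠ 1)
    (hla : la ≠ 0) (hlb : lb ≠ 0) (a : Fin m) (b : ℕ) (hb : b < m) :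
    ∀ k : ℕ, k ≤ b →
      ∃ C : K, C ≠ 0 ∧ ((VF11 q la lb m) ^ k) (Finsupp.single (a, b) (1 : K))
        = C • Finsupp.single (a + (k : Fin m), b - k) (1 : K) := by
  intro k
  induction k with
  | zero => intro _; exact ⟨1, one_ne_zero, by simp⟩
  | succ n ih =>
      intro hn1
      obtain ⟨C, hC, hCe⟩ := ih (Nat.le_of_succ_le hn1)
      have hbn : 1 ≤ b - n := Nat.le_sub_of_add_le (by omega)
      have hbn2 : b - n < m := lt_of_le_of_lt (Nat.sub_le _ _) hb
      have hs : ((if ((a + (n : Fin m) : Fin m) : ℕ) = m - 1 then lb else 1) * la *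
          q ^ ((a + (n : Fin m) : Fin m) : ℕ) * (q ^ (b - n) - 1)) ≠ 0 := by
        refine mul_ne_zero (mul_ne_zero (mul_ne_zero ?_ hla) (pow_ne_zero _ (q_ne_zero q m hq1))) ?_
        · split <;> simp [hlb]
        · exact sub_ne_zero.2 (hq2 _ hbn hbn2)
      refine ⟨C * _, mul_ne_zero hC hs, ?_⟩
      rw [pow_succ', Module.End.mul_apply, hCe, map_smul, VF11_single, if_neg (by omega : ¬(b - n = 0)), smul_smul]
      have hidx : ((a + (n : Fin m) + 1 : Fin m), b - n - 1) = (a + ((n + 1 : ℕ) : Fin m), b - (n + 1)) := by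
        rw [Prod.mk.injEq]
        exact ⟨by rw [Nat.cast_add, Nat.cast_one, add_assoc], by omega⟩
      rw [← hidx]

lemma VF11_pow_single_zero (hq1 : q ^ m = 1) (hq2 : ∀ k : ℕ, 1 ≤ k → k < m → q ^ k ≠ 1)
    (hla : la ≠ 0) (hlb : lb ≠ 0) (a : Fin m) (b : ℕ) (hb : b < m) (k : ℕ) (hk : b < k) :
    ((VF11 q la lb m) ^ k) (Finsupp.single (a, b) (1 : K)) = 0 := by
  obtain ⟨C, hC, hCe⟩ := VF11_pow_single q la lb m hq1 hq2 hla hlb a b hb b le_rfl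
  have hsucc : ((VF11 q la lb m) ^ (b + 1)) (Finsupp.single (a, b) (1 : K)) = 0 := by
    rw [pow_succ', Module.End.mul_apply, hCe, map_smul, VF11_single]
    simp [Nat.sub_self]
  have hk' : k = (k - (b + 1)) + (b + 1) := by omega
  rw [hk', pow_add, Module.End.mul_apply, hsucc, map_zero]

lemma VF21_single (p : Fin m × ℕ) :
    VF21 lb m (Finsupp.single p 1) =
      (if (p.1 : ℕ) = m - 1 then lb else 1) • Finsupp.single (p.1 + 1, p.2) (1 : K) := by
  rw [VF21, Finsupp.linearCombination_single, one_smul]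

lemma VF22_single (p : Fin m × ℕ) :
    VF22 (K := K) m (Finsupp.single p 1) = Finsupp.single (p.1, p.2 + 1) (1 : K) := by
  rw [VF22, Finsupp.linearCombination_single, one_smul]

lemma all_singles_mem (hlb : lb ≠ 0) (W : Submodule K (VermaSpace K m))
    (hW21 : ∀ v ∈ W, VF21 lb m v ∈ W) (hW22 : ∀ v ∈ W, VF22 (K := K) m v ∈ W)
    (a0 : Fin m) (h0 : Finsupp.single (a0, 0) (1 : K) ∈ W) :
    ∀ (a : Fin m) (b : ℕ), Finsupp.single (a, b) (1 : K) ∈ W := by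
  have hrow : ∀ j : ℕ, Finsupp.single ((a0 + (j : Fin m) : Fin m), 0) (1 : K) ∈ W := by
    intro j
    induction j with
    | zero => simpa using h0
    | succ n ih =>
        have h1 := hW21 _ ih
        rw [VF21_single] at h1
        have hs : (if ((a0 + (n : Fin m) : Fin m) : ℕ) = m - 1 then lb else 1) ≠ 0 := by
          split <;> simp [hlb]
        have h2 := Submodule.smul_mem W (if ((a0 + (n : Fin m) : Fin m) : ℕ) = m - 1 then lb else 1)⁻¹ h1
        rw [smul_smul, inv_mul_cancel₀ hs, one_smul] at h2
        have : ((a0 + (n : Fin m) : Fin m) + 1, (0 : ℕ)) = ((a0 + ((n + 1 : ℕ) : Fin m) : Fin m), 0) := by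
          rw [Prod.mk.injEq]
          exact ⟨by rw [Nat.cast_add, Nat.cast_one, add_assoc], rfl⟩
        rwa [this] at h2
  have hall0 : ∀ a : Fin m, Finsupp.single (a, 0) (1 : K) ∈ W := by
    intro a
    have := hrow ((a - a0 : Fin m) : ℕ)
    rwa [Fin.cast_val_eq_self, add_comm, sub_add_cancel] at this
  intro a b
  induction b with
  | zero => exact hall0 a
  | succ n ih =>
      have := hW22 _ ih
      rwa [VF22_single] at this

lemma pow_mem_invariant (f : VermaSpace K m →ₗ[K] VermaSpace K m) (W : Submodule K (VermaSpace K m))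
    (hf : ∀ v ∈ W, f v ∈ W) (j : ℕ) (w : VermaSpace K m) (hw : w ∈ W) : (f ^ j) w ∈ W := by
  induction j with
  | zero => simpa using hw
  | succ n ih => rw [pow_succ', Module.End.mul_apply]; exact hf _ ih

lemma exists_single_zero_mem (hq1 : q ^ m = 1) (hq2 : ∀ k : ℕ, 1 ≤ k → k < m → q ^ k ≠ 1)
    (hla : la ≠ 0) (hlb : lb ≠ 0) (W : Submodule K (VermaSpace K m))
    (hW11 : ∀ v ∈ W, VF11 q la lb m v ∈ W) (hW12 : ∀ v ∈ W, VF12 q la m v ∈ W)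
    (hMW : Mpm (K := K) m 1 ≤ W) (w : VermaSpace K m) (hw : w ∈ W)
    (hnm : w ∉ Mpm (K := K) m 1) :
    ∃ a0 : Fin m, Finsupp.single (a0, 0) (1 : K) ∈ W := by
  rw [Mpm_eq_supported, Finsupp.mem_supported'] at hnm
  push_neg at hnm
  obtain ⟨p0, hp0s, hp0⟩ := hnm
  have hp0lt : p0.2 < m := Nat.lt_of_not_le hp0s
  set c : ℕ := ((p0.1 : ℕ) + p0.2) % m with hc
  have hcm : c < m := Nat.mod_lt _ (NeZero.pos m)
  set u1 : VermaSpace K m := w.filter (fun p : Fin m × ℕ => ((p.1 : ℕ) + p.2) % m = c) with hu1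
  have hu1W : u1 ∈ W := filter_mem q la m hq1 hq2 hla W hW12 w hw c hcm
  set u : VermaSpace K m := u1.filter (fun p : Fin m × ℕ => p.2 < m) with hu
  have huW : u ∈ W := by
    have hrest : u1.filter (fun p : Fin m × ℕ => ¬ p.2 < m) ∈ Mpm (K := K) m 1 := by
      rw [Mpm_eq_supported, Finsupp.mem_supported']
      intro p hp
      exact Finsupp.filter_apply_neg _ _ (by simpa using hp)
    have : u + u1.filter (fun p : Fin m × ℕ => ¬ p.2 < m) = u1 :=
      Finsupp.filter_pos_add_filter_neg _ _
    have := this ▸ (Submodule.add_mem_iff_left W (hMW hrest)).symm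
    rw [← Finsupp.filter_pos_add_filter_neg (p := fun p : Fin m × ℕ => p.2 < m) u1] at hu1W
    exact (Submodule.add_mem_iff_left W (hMW hrest)).1 hu1W
  have hup0 : u p0 = w p0 := by
    rw [hu, Finsupp.filter_apply_pos (fun x : Fin m × ℕ => x.2 < m) u1 hp0lt, hu1,
      Finsupp.filter_apply_pos (fun x : Fin m × ℕ => ((x.1 : ℕ) + x.2) % m = c) w rfl]
  have hp0mem : p0 ∈ u.support := Finsupp.mem_support_iff.2 (by rw [hup0]; exact hp0)
  have hsupp : ∀ p ∈ u.support, p.2 < m ∧ ((p.1 : ℕ) + p.2) % m = c := by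
    intro p hp
    rw [Finsupp.mem_support_iff] at hp
    by_cases h1 : p.2 < m
    · refine ⟨h1, ?_⟩
      by_contra h2
      apply hp
      rw [hu, Finsupp.filter_apply_pos (fun x : Fin m × ℕ => x.2 < m) u1 h1, hu1,
        Finsupp.filter_apply_neg (fun x : Fin m × ℕ => ((x.1 : ℕ) + x.2) % m = c) w h2]
    · exact absurd (Finsupp.filter_apply_neg (fun x : Fin m × ℕ => x.2 < m) u1 h1) hp
  obtain ⟨ps, hpsmem, hpsmax⟩ := Finset.exists_max_image u.support (fun p => p.2)
    ⟨p0, hp0mem⟩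
  set k : ℕ := ps.2 with hk
  have hkm : k < m := (hsupp ps hpsmem).1
  obtain ⟨C, hC, hCe⟩ := VF11_pow_single q la lb m hq1 hq2 hla hlb ps.1 k hkm k le_rfl
  have hv : ((VF11 q la lb m) ^ k) u
      = ∑ p ∈ u.support, ((VF11 q la lb m) ^ k) (Finsupp.single p (u p)) := by
    conv_lhs => rw [← Finsupp.sum_single u]
    rw [map_finsuppSum]
    rfl
  have hterm : ∀ p ∈ u.support, p ≠ ps →
      ((VF11 q la lb m) ^ k) (Finsupp.single p (u p)) = 0 := by
    intro p hp hne
    have h2 := hsupp p hp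
    have hle : p.2 ≤ k := hpsmax p hp
    rcases Nat.lt_or_ge p.2 k with hlt | hge
    · have : Finsupp.single p (u p) = (u p) • Finsupp.single (p.1, p.2) (1 : K) := by
        rw [Finsupp.smul_single', mul_one]
      rw [this, map_smul, VF11_pow_single_zero q la lb m hq1 hq2 hla hlb p.1 p.2 h2.1 k hlt,
        smul_zero]
    · exfalso
      have hpk : p.2 = k := le_antisymm hle hge
      apply hne
      have hmod : ((p.1 : ℕ) + k) % m = ((ps.1 : ℕ) + k) % m := by
        rw [← hpk, h2.2, hpk, hk, (hsupp ps hpsmem).2]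
      have : (p.1 : ℕ) % m = (ps.1 : ℕ) % m :=
        Nat.ModEq.add_right_cancel' k hmod
      rw [Nat.mod_eq_of_lt p.1.isLt, Nat.mod_eq_of_lt ps.1.isLt] at this
      exact Prod.ext (Fin.ext this) hpk
  have hfinal : ((VF11 q la lb m) ^ k) u
      = (u ps * C) • Finsupp.single (ps.1 + (k : Fin m), 0) (1 : K) := by
    rw [hv, Finset.sum_eq_single ps hterm (fun h => absurd hpsmem h)]
    have : Finsupp.single ps (u ps) = (u ps) • Finsupp.single (ps.1, ps.2) (1 : K) := by
      rw [Finsupp.smul_single', mul_one]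
    rw [this, map_smul]
    rw [show (ps.1, ps.2) = (ps.1, k) from rfl, hCe, Nat.sub_self, smul_smul]
  have hvW : ((VF11 q la lb m) ^ k) u ∈ W := pow_mem_invariant m _ W hW11 k u huW
  rw [hfinal] at hvW
  refine ⟨ps.1 + (k : Fin m), ?_⟩
  have hne : u ps * C ≠ 0 := mul_ne_zero (Finsupp.mem_support_iff.1 hpsmem) hC
  have := Submodule.smul_mem W (u ps * C)⁻¹ hvW
  rwa [smul_smul, inv_mul_cancel₀ hne, one_smul] at this

lemma W_eq_top_of_singles (W : Submodule K (VermaSpace K m))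
    (hall : ∀ p : Fin m × ℕ, Finsupp.single p (1 : K) ∈ W) : W = ⊤ := by
  rw [eq_top_iff]
  intro v _
  rw [← Finsupp.sum_single v]
  refine Submodule.sum_mem W fun p _ => ?_
  have : Finsupp.single p (v p) = (v p) • Finsupp.single p (1 : K) := by
    rw [Finsupp.smul_single', mul_one]
  rw [this]
  exact Submodule.smul_mem W _ (hall p)


/-- Let `q` be a primitive `m`-th root of unity and `λ₁, λ₂ ∈ K`
nonzero. The quotient `Q_{1,m} = M(λ)/M_{1,m}` of the Verma module is a simple right
`Mat₂(q)`-module of `K`-dimension `m²`: equivalently, `M_{1,m}` is a proper subspace, any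
invariant subspace containing `M_{1,m}` is `M_{1,m}` or everything, and the quotient has
dimension `m²`. -/
theorem DDMat2_verma_quotient_Q1_simple
    (hq1 : q ^ m = 1) (hq2 : ∀ k : ℕ, 1 ≤ k → k < m → q ^ k ≠ 1)
    (hla : la ≠ 0) (hlb : lb ≠ 0) :
    Mpm (K := K) m 1 ≠ ⊤ ∧
    (∀ W : Submodule K (VermaSpace K m),
        (∀ v ∈ W, VF11 q la lb m v ∈ W) → (∀ v ∈ W, VF12 q la m v ∈ W) →
        (∀ v ∈ W, VF21 lb m v ∈ W) → (∀ v ∈ W, VF22 (K := K) m v ∈ W) →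
        Mpm (K := K) m 1 ≤ W → W = Mpm (K := K) m 1 ∨ W = ⊤) ∧
    Module.finrank K (VermaSpace K m ⧸ Mpm (K := K) m 1) = m ^ 2 := by
  refine ⟨?_, ?_, finrank_quot m⟩
  · intro h
    exact single_not_mem_Mpm m 0 0 (NeZero.pos m) (h ▸ Submodule.mem_top)
  · intro W h11 h12 h21 h22 hMW
    by_cases hle : W ≤ Mpm (K := K) m 1
    · exact Or.inl (le_antisymm hle hMW)
    · right
      obtain ⟨w, hwW, hwn⟩ := SetLike.not_le_iff_exists.1 hle
      obtain ⟨a0, ha0⟩ := exists_single_zero_mem q la lb m hq1 hq2 hla hlb W h11 h12 hMW w hwW hwn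
      exact W_eq_top_of_singles m W fun p =>
        all_singles_mem lb m hlb W h21 h22 a0 ha0 p.1 p.2
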